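/- Let A be an n×n real matrix, Q an n×n positive semidefinite real matrix, P̄ an n×n positive semidefinite real matrix, and h(X) = A X Aᵀ + Q. Let λ ∈ (0,1), and on a probability space let (λ_k)_{k≥1} be an i.i.d. sequence of {0,1}-valued random variables with P(λ_k = 1) = λ. Define P_0 = P̄ and, for k ≥ 1, P_k = P̄ if λ_k = 1 and P_k = h(P_{k−1}) if λ_k = 0. If the series Σ_{i≥0} (1−λ)^i · trace(h^i(P̄)) is summable, then lim_{k→∞} E[trace(P_k)] = Σ_{i=0}^{∞} λ(1−λ)^i · trace(h^i(P̄)), and consequently the time-averaged cost satisfies lim_{T→∞} (1/T) Σ_{k=1}^{T} E[trace(P_k)] = Σ_{i=0}^{∞} λ(1−λ)^i · trace(h^i(P̄)). -/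

import Mathlib

open Matrix MeasureTheory ProbabilityTheory Filter

/-- Number of consecutive dropouts ending at time `k`. -/
def runLen {Ω : Type*} (lam : ℕ → Ω → Bool) : ℕ → Ω → ℕ
  | 0, _ => 0
  | (k+1), ω => if lam (k+1) ω then 0 else runLen lam k ω + 1

lemma runLen_le {Ω : Type*} (lam : ℕ → Ω → Bool) : ∀ k ω, runLen lam k ω ≤ k := by
  intro k
  induction k with
  | zero => intro ω; simp [runLen]
  | succ k ih =>
    intro ω
    by_cases hc : lam (k+1) ω = true
    · simp [runLen, hc]
    · have hcf : lam (k+1) ω = false := by simpa using hc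
      simp only [runLen, hcf, Bool.false_eq_true, if_false]
      have := ih ω; omega

lemma measurable_runLen {Ω : Type*} [MeasurableSpace Ω] (lam : ℕ → Ω → Bool)
    (hmeas : ∀ k, Measurable (lam k)) : ∀ k, Measurable (runLen lam k) := by
  intro k
  induction k with
  | zero => exact measurable_const
  | succ k ih =>
    exact Measurable.ite ((hmeas (k+1)) (measurableSet_singleton true)) measurable_const
      (ih.add measurable_const)

lemma runLen_eq_iff {Ω : Type*} (lam : ℕ → Ω → Bool) (ω : Ω) :
    ∀ k i, i ≤ k → (runLen lam k ω = i ↔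
      ((∀ j, k - i < j → j ≤ k → lam j ω = false) ∧ (i < k → lam (k - i) ω = true))) := by
  intro k
  induction k with
  | zero =>
    intro i hi
    interval_cases i
    exact ⟨fun _ => ⟨fun j hj1 hj2 => (by omega : False).elim,
      fun h => (absurd h (lt_irrefl 0))⟩, fun _ => rfl⟩
  | succ k ih =>
    intro i hi
    by_cases hc : lam (k+1) ω = true
    · simp only [runLen, hc, if_true]
      constructor
      · rintro rfl
        exact ⟨fun j hj1 hj2 => (by omega : False).elim,
          fun _ => by simpa using hc⟩
      · rintro ⟨h1, h2⟩
        rcases Nat.eq_zero_or_pos i with rfl | hipos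
        · rfl
        · exact absurd (h1 (k+1) (by omega) le_rfl) (by simp [hc])
    · have hcf : lam (k+1) ω = false := by simpa using hc
      simp only [runLen, hcf, Bool.false_eq_true, if_false]
      cases i with
      | zero =>
        constructor
        · intro h; exact absurd h (Nat.succ_ne_zero _)
        · rintro ⟨h1, h2⟩
          have h3 := h2 (by omega)
          rw [Nat.sub_zero] at h3
          rw [h3] at hcf
          cases hcf
      | succ i' =>
        have hii : i' ≤ k := by omega
        rw [Nat.add_right_cancel_iff, ih i' hii]
        constructor
        · rintro ⟨h1, h2⟩
          refine ⟨fun j hj1 hj2 => ?_, fun hik => ?_⟩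
          · rcases Nat.lt_or_ge j (k+1) with hj | hj
            · exact h1 j (by omega) (by omega)
            · have hje : j = k + 1 := by omega
              rw [hje]; exact hcf
          · have he : k + 1 - (i' + 1) = k - i' := by omega
            rw [he]; exact h2 (by omega)
        · rintro ⟨h1, h2⟩
          refine ⟨fun j hj1 hj2 => h1 j (by omega) (by omega), fun hik => ?_⟩
          have he : k - i' = k + 1 - (i' + 1) := by omega
          rw [he]; exact h2 (by omega)

/-- Worst-case estimation performance when all flag-ACKs are blocked: under the
same recursion as before, if `∑ (1-λ)^i trace (h^[i] P̄)` is summable, then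
`E[trace (P k)]` converges to `∑_{i=0}^∞ λ (1-λ)^i trace (h^[i] P̄)`, and so does
the time-averaged cost `(1/T) ∑_{k=1}^T E[trace (P k)]`. -/
theorem expected_trace_error_covariance_limit {d : ℕ}
    (A Q Pbar : Matrix (Fin d) (Fin d) ℝ) (hQ : Q.PosSemidef) (hPbar : Pbar.PosSemidef)
    (lam_prob : ℝ) (hlam0 : 0 < lam_prob) (hlam1 : lam_prob < 1)
    {Ω : Type*} [MeasurableSpace Ω] (μ : Measure Ω) [IsProbabilityMeasure μ]
    (lam : ℕ → Ω → Bool) (hmeas : ∀ k, Measurable (lam k))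
    (hindep : iIndepFun lam μ)
    (hdist : ∀ k, 1 ≤ k → (μ {ω | lam k ω = true}).toReal = lam_prob)
    (P : ℕ → Ω → Matrix (Fin d) (Fin d) ℝ)
    (hP0 : ∀ ω, P 0 ω = Pbar)
    (hPrec : ∀ k ω, P (k + 1) ω =
      if lam (k + 1) ω = true then Pbar else A * P k ω * Aᵀ + Q)
    (hsum : Summable (fun i => (1 - lam_prob) ^ i * ((fun Z => A * Z * Aᵀ + Q)^[i] Pbar).trace)) :
    Tendsto (fun k => ∫ ω, (P k ω).trace ∂μ) atTop
      (nhds (∑' i : ℕ,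
        lam_prob * (1 - lam_prob) ^ i * ((fun Z => A * Z * Aᵀ + Q)^[i] Pbar).trace)) ∧
    Tendsto (fun T : ℕ => (1 / (T : ℝ)) * ∑ k ∈ Finset.Icc 1 T, ∫ ω, (P k ω).trace ∂μ) atTop
      (nhds (∑' i : ℕ,
        lam_prob * (1 - lam_prob) ^ i * ((fun Z => A * Z * Aᵀ + Q)^[i] Pbar).trace)) := by
  set hfun : Matrix (Fin d) (Fin d) ℝ → Matrix (Fin d) (Fin d) ℝ :=
    fun Z => A * Z * Aᵀ + Q with hhfun
  set c : ℕ → ℝ := fun i => (hfun^[i] Pbar).trace with hc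
  -- P in terms of runLen
  have hPtr : ∀ k ω, P k ω = hfun^[runLen lam k ω] Pbar := by
    intro k
    induction k with
    | zero => intro ω; simp [hP0, runLen]
    | succ k ih =>
      intro ω
      rw [hPrec]
      by_cases hco : lam (k+1) ω = true
      · simp [runLen, hco]
      · have hcf : lam (k+1) ω = false := by simpa using hco
        simp only [runLen, hcf, Bool.false_eq_true, if_false]
        rw [Function.iterate_succ_apply', ih ω]
  -- basic probabilities
  have hμtrue : ∀ j, 1 ≤ j → (μ (lam j ⁻¹' {true})).toReal = lam_prob := by
    intro j hj
    have he : lam j ⁻¹' {true} = {ω | lam j ω = true} := by ext ω; simp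
    rw [he]; exact hdist j hj
  have hμfalse : ∀ j, 1 ≤ j → (μ (lam j ⁻¹' {false})).toReal = 1 - lam_prob := by
    intro j hj
    have hcpl : lam j ⁻¹' {false} = (lam j ⁻¹' {true})ᶜ := by ext ω; simp
    rw [hcpl, measure_compl ((hmeas j) (measurableSet_singleton true)) (measure_ne_top μ _),
      measure_univ, ENNReal.toReal_sub_of_le prob_le_one ENNReal.one_ne_top,
      ENNReal.toReal_one, hμtrue j hj]
  -- probability of {runLen = i} for i < k
  have hprob : ∀ k i, i < k →
      (μ {ω | runLen lam k ω = i}).toReal = lam_prob * (1 - lam_prob) ^ i := by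
    intro k i hik
    have hset : {ω | runLen lam k ω = i} =
        ⋂ j ∈ Finset.Icc (k - i) k, lam j ⁻¹' {decide (j = k - i)} := by
      ext ω
      simp only [Set.mem_setOf_eq, Set.mem_iInter, Set.mem_preimage, Set.mem_singleton_iff,
        Finset.mem_Icc]
      rw [runLen_eq_iff lam ω k i (le_of_lt hik)]
      constructor
      · rintro ⟨h1, h2⟩ j hj
        by_cases hje : j = k - i
        · simp [hje, h2 hik]
        · rw [decide_eq_false hje]
          exact h1 j (by omega) hj.2
      · intro hAll
        refine ⟨fun j hj1 hj2 => ?_, fun _ => ?_⟩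
        · have := hAll j ⟨by omega, hj2⟩
          rwa [decide_eq_false (by omega : ¬ j = k - i)] at this
        · have := hAll (k - i) ⟨le_rfl, by omega⟩
          rwa [decide_eq_true (rfl)] at this
    have hsm : ∀ j ∈ Finset.Icc (k - i) k,
        MeasurableSet[(inferInstance : MeasurableSpace Bool).comap (lam j)]
          (lam j ⁻¹' {decide (j = k - i)}) :=
      fun j _ => ⟨{decide (j = k - i)}, measurableSet_singleton _, rfl⟩
    rw [hset, hindep.meas_biInter hsm, ENNReal.toReal_prod]
    have hsplit : Finset.Icc (k - i) k = insert (k - i) (Finset.Icc (k - i + 1) k) := by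
      ext j; simp only [Finset.mem_Icc, Finset.mem_insert]; omega
    rw [hsplit, Finset.prod_insert (by simp only [Finset.mem_Icc]; omega)]
    have h1 : (μ (lam (k - i) ⁻¹' {decide (k - i = k - i)})).toReal = lam_prob := by
      rw [decide_eq_true rfl]; exact hμtrue _ (by omega)
    have h2 : ∀ j ∈ Finset.Icc (k - i + 1) k,
        (μ (lam j ⁻¹' {decide (j = k - i)})).toReal = 1 - lam_prob := by
      intro j hj
      simp only [Finset.mem_Icc] at hj
      rw [decide_eq_false (by omega : ¬ j = k - i)]
      exact hμfalse j (by omega)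
    rw [h1, Finset.prod_congr rfl h2, Finset.prod_const, Nat.card_Icc,
      show k + 1 - (k - i + 1) = i by omega]
  -- probability of {runLen = k}
  have hprobk : ∀ k, 1 ≤ k →
      (μ {ω | runLen lam k ω = k}).toReal = (1 - lam_prob) ^ k := by
    intro k hk
    have hset : {ω | runLen lam k ω = k} = ⋂ j ∈ Finset.Icc 1 k, lam j ⁻¹' {false} := by
      ext ω
      simp only [Set.mem_setOf_eq, Set.mem_iInter, Set.mem_preimage, Set.mem_singleton_iff,
        Finset.mem_Icc]
      rw [runLen_eq_iff lam ω k k le_rfl]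
      constructor
      · rintro ⟨h1, -⟩ j hj
        exact h1 j (by omega) hj.2
      · intro hAll
        exact ⟨fun j hj1 hj2 => hAll j ⟨by omega, hj2⟩, fun h => absurd h (lt_irrefl k)⟩
    have hsm : ∀ j ∈ Finset.Icc 1 k,
        MeasurableSet[(inferInstance : MeasurableSpace Bool).comap (lam j)]
          (lam j ⁻¹' {false}) :=
      fun j _ => ⟨{false}, measurableSet_singleton _, rfl⟩
    rw [hset, hindep.meas_biInter hsm, ENNReal.toReal_prod,
      Finset.prod_congr rfl (fun j hj => hμfalse j (Finset.mem_Icc.mp hj).1),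
      Finset.prod_const, Nat.card_Icc, show k + 1 - 1 = k by omega]
  -- integral formula
  have hms : ∀ k i, MeasurableSet {ω | runLen lam k ω = i} := by
    intro k i
    exact (measurable_runLen lam hmeas k) (measurableSet_singleton i)
  have hint : ∀ k, ∫ ω, (P k ω).trace ∂μ =
      ∑ i ∈ Finset.range (k+1), (μ {ω | runLen lam k ω = i}).toReal * c i := by
    intro k
    have hcomp : ∀ ω, (P k ω).trace =
        ∑ i ∈ Finset.range (k+1),
          Set.indicator {ω' | runLen lam k ω' = i} (fun _ => c i) ω := by
      intro ω
      rw [hPtr k ω]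
      simp only [Set.indicator_apply, Set.mem_setOf_eq]
      rw [Finset.sum_ite_eq (Finset.range (k+1)) (runLen lam k ω) c,
        if_pos (Finset.mem_range.mpr (by have := runLen_le lam k ω; omega))]
    calc ∫ ω, (P k ω).trace ∂μ
        = ∫ ω, ∑ i ∈ Finset.range (k+1),
            Set.indicator {ω' | runLen lam k ω' = i} (fun _ => c i) ω ∂μ := by
          exact integral_congr_ae (Filter.Eventually.of_forall hcomp)
      _ = ∑ i ∈ Finset.range (k+1),
            ∫ ω, Set.indicator {ω' | runLen lam k ω' = i} (fun _ => c i) ω ∂μ :=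
          integral_finset_sum _ (fun i _ => (integrable_const (c i)).indicator (hms k i))
      _ = ∑ i ∈ Finset.range (k+1), (μ {ω | runLen lam k ω = i}).toReal * c i := by
          refine Finset.sum_congr rfl (fun i _ => ?_)
          rw [integral_indicator_const (c i) (hms k i), smul_eq_mul, measureReal_def]
  have hkey : ∀ k, 1 ≤ k → ∫ ω, (P k ω).trace ∂μ =
      (∑ i ∈ Finset.range k, lam_prob * (1 - lam_prob) ^ i * c i)
        + (1 - lam_prob) ^ k * c k := by
    intro k hk
    rw [hint k, Finset.sum_range_succ, hprobk k hk]
    congr 1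
    refine Finset.sum_congr rfl (fun i hi => ?_)
    rw [hprob k i (Finset.mem_range.mp hi)]
  -- limits
  have hs2 : Summable (fun i => lam_prob * (1 - lam_prob) ^ i * c i) := by
    simpa [mul_assoc] using hsum.mul_left lam_prob
  have h1 : Tendsto (fun k => ∑ i ∈ Finset.range k, lam_prob * (1 - lam_prob) ^ i * c i)
      atTop (nhds (∑' i, lam_prob * (1 - lam_prob) ^ i * c i)) :=
    hs2.hasSum.tendsto_sum_nat
  have h2 : Tendsto (fun k => (1 - lam_prob) ^ k * c k) atTop (nhds 0) :=
    hsum.tendsto_atTop_zero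
  have hmain : Tendsto (fun k => ∫ ω, (P k ω).trace ∂μ) atTop
      (nhds (∑' i, lam_prob * (1 - lam_prob) ^ i * c i)) := by
    have hadd := h1.add h2
    rw [add_zero] at hadd
    refine Tendsto.congr' ?_ hadd
    filter_upwards [eventually_ge_atTop 1] with k hk
    exact (hkey k hk).symm
  refine ⟨hmain, ?_⟩
  have hv : Tendsto (fun k => ∫ ω, (P (k+1) ω).trace ∂μ) atTop
      (nhds (∑' i, lam_prob * (1 - lam_prob) ^ i * c i)) := by
    have := hmain.comp (tendsto_add_atTop_nat 1)
    simpa [Function.comp_def] using this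
  refine (hv.cesaro).congr (fun T => ?_)
  rw [one_div, ← Finset.Ico_add_one_right_eq_Icc, Finset.sum_Ico_eq_sum_range]
  simp only [Nat.add_sub_cancel]
  congr 1
  exact Finset.sum_congr rfl (fun i _ => by rw [add_comm 1 i])
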